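/- Suppose the running costs L^i : ℝ^n × ℝ^m × {0,...,T−1} → ℝ, the candidate potential P : ℝ^n × ℝ^m × {0,...,T−1} → ℝ, the terminal costs S^i : ℝ^n → ℝ, and the candidate terminal potential R : ℝ^n → ℝ are continuously differentiable, and that for every agent i, every k = 0,...,T−1, and all (x, u) ∈ ℝ^n × ℝ^m: ∂L^i(x, u, k)/∂x^i = ∂P(x, u, k)/∂x^i, ∂L^i(x, u, k)/∂u^i = ∂P(x, u, k)/∂u^i, and ∂S^i(x_T)/∂x^i_T = ∂R(x_T)/∂x^i_T for all x_T ∈ ℝ^n (partial derivatives taken with respect to agent i's state and action blocks). Then the game is a constrained dynamic potential game with potential (P, R); that is, for every agent i, every pair of strategies γ^i, ν^i of agent i, and every strategy profile γ^{-i} of the other agents: J^i(x_0, (γ^i, γ^{-i})) − J^i(x_0, (ν^i, γ^{-i})) = J(x_0, (γ^i, γ^{-i})) − J(x_0, (ν^i, γ^{-i})), where J(x_0, γ) = R(x_T) + Σ_{k=0}^{T−1} P(x_k, u_k, k). -/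

import Mathlib

/-- If two differentiable functions on a pi-type have equal partial derivatives with
respect to the `i`-th block everywhere, their difference is unchanged when the
`i`-th block is changed. -/
lemma update_diff_const {ι : Type*} [Fintype ι] [DecidableEq ι]
    {E : ι → Type*} [∀ j, NormedAddCommGroup (E j)] [∀ j, NormedSpace ℝ (E j)]
    (g h : (∀ j, E j) → ℝ) (hg : Differentiable ℝ g) (hh : Differentiable ℝ h) (i : ι)
    (heq : ∀ x : ∀ j, E j, fderiv ℝ (fun xi => g (Function.update x i xi)) (x i)
      = fderiv ℝ (fun xi => h (Function.update x i xi)) (x i))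
    (x : ∀ j, E j) (a : E i) :
    g (Function.update x i a) - h (Function.update x i a) = g x - h x := by
  have hgd : ∀ (x : ∀ j, E j), Differentiable ℝ (fun xi : E i => g (Function.update x i xi)) :=
    fun x y => (hg _).comp y (hasFDerivAt_update x y).differentiableAt
  have hhd : ∀ (x : ∀ j, E j), Differentiable ℝ (fun xi : E i => h (Function.update x i xi)) :=
    fun x y => (hh _).comp y (hasFDerivAt_update x y).differentiableAt
  have hdiff : Differentiable ℝ (fun xi : E i => g (Function.update x i xi) - h (Function.update x i xi)) :=
    (hgd x).sub (hhd x)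
  have hz : ∀ y : E i, fderiv ℝ (fun xi : E i => g (Function.update x i xi) - h (Function.update x i xi)) y = 0 := by
    intro y
    rw [fderiv_fun_sub (hgd x y) (hhd x y)]
    have h1 := heq (Function.update x i y)
    simp only [Function.update_idem, Function.update_self] at h1
    rw [h1, sub_self]
  have := is_const_of_fderiv_eq_zero hdiff hz a (x i)
  simpa [Function.update_eq_self, sub_eq_sub_iff_sub_eq_sub] using this



/-!
Lemma 1: if the partial derivatives of each agent's running cost `L^i` with
respect to its own state and action blocks agree with those of a candidate
potential `P`, and likewise the derivative of the terminal cost `S^i` with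
respect to its own state block agrees with that of `R`, then the game is a
constrained dynamic potential game with potential `(P, R)`.

Setup: `N` agents, horizon `T`.  Agent `i` has state space `Fin (n i) → ℝ`
and action space `Fin (m i) → ℝ`; the joint state/action spaces are the
dependent products over agents.  Each agent's state evolves under its own
dynamics `f i` from the initial state `x0`.
-/

/-- The joint state trajectory generated from initial state `x0` under
per-agent dynamics `f` and open-loop strategy profile `γ`. -/
noncomputable def traj {N : ℕ} {n m : Fin N → ℕ}
    (f : ∀ i : Fin N, (Fin (n i) → ℝ) → (Fin (m i) → ℝ) → ℕ → (Fin (n i) → ℝ))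
    (x0 : ∀ i, Fin (n i) → ℝ) (γ : ∀ i, ℕ → Fin (m i) → ℝ) :
    ℕ → ∀ i, Fin (n i) → ℝ
  | 0 => x0
  | (k + 1) => fun i => f i (traj f x0 γ k i) (γ i k) k

/-- Cost of agent `i`: terminal cost plus sum of running costs. -/
noncomputable def agentCost {N : ℕ} {n m : Fin N → ℕ} (T : ℕ)
    (f : ∀ i : Fin N, (Fin (n i) → ℝ) → (Fin (m i) → ℝ) → ℕ → (Fin (n i) → ℝ))
    (x0 : ∀ i, Fin (n i) → ℝ)
    (L : ∀ _ : Fin N, (∀ j, Fin (n j) → ℝ) → (∀ j, Fin (m j) → ℝ) → ℕ → ℝ)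
    (S : ∀ _ : Fin N, (∀ j, Fin (n j) → ℝ) → ℝ)
    (i : Fin N) (γ : ∀ j, ℕ → Fin (m j) → ℝ) : ℝ :=
  S i (traj f x0 γ T) +
    ∑ k ∈ Finset.range T, L i (traj f x0 γ k) (fun j => γ j k) k

/-- Candidate potential cost: `R` at the terminal joint state plus the sum
of the running potential `P` over the horizon. -/
noncomputable def potCost {N : ℕ} {n m : Fin N → ℕ} (T : ℕ)
    (f : ∀ i : Fin N, (Fin (n i) → ℝ) → (Fin (m i) → ℝ) → ℕ → (Fin (n i) → ℝ))
    (x0 : ∀ i, Fin (n i) → ℝ)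
    (P : (∀ j, Fin (n j) → ℝ) → (∀ j, Fin (m j) → ℝ) → ℕ → ℝ)
    (R : (∀ j, Fin (n j) → ℝ) → ℝ)
    (γ : ∀ j, ℕ → Fin (m j) → ℝ) : ℝ :=
  R (traj f x0 γ T) +
    ∑ k ∈ Finset.range T, P (traj f x0 γ k) (fun j => γ j k) k

/-- Under continuous differentiability of `L^i`, `P`,
`S^i`, `R`, if for every agent `i`, every `k < T`, and all joint states `x`
and actions `u` the partial derivatives of `L^i` and `P` with respect to
agent `i`'s state block and action block coincide, and the partial
derivatives of `S^i` and `R` with respect to agent `i`'s state block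
coincide, then the game is a constrained dynamic potential game with
potential `(P, R)`: for every agent `i`, strategy profile `γ`, and
alternative strategy `ν` of agent `i`,
`J^i(γ) − J^i(ν, γ^{-i}) = J(γ) − J(ν, γ^{-i})`. -/
theorem gradient_conditions_imply_potential_game
    {N T : ℕ} (n m : Fin N → ℕ)
    (f : ∀ i : Fin N, (Fin (n i) → ℝ) → (Fin (m i) → ℝ) → ℕ → (Fin (n i) → ℝ))
    (x0 : ∀ i, Fin (n i) → ℝ)
    (L : ∀ _ : Fin N, (∀ j, Fin (n j) → ℝ) → (∀ j, Fin (m j) → ℝ) → ℕ → ℝ)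
    (S : ∀ _ : Fin N, (∀ j, Fin (n j) → ℝ) → ℝ)
    (P : (∀ j, Fin (n j) → ℝ) → (∀ j, Fin (m j) → ℝ) → ℕ → ℝ)
    (R : (∀ j, Fin (n j) → ℝ) → ℝ)
    (hLsmooth : ∀ (i : Fin N) (k : ℕ), k < T →
      ContDiff ℝ 1 (fun p : (∀ j, Fin (n j) → ℝ) × (∀ j, Fin (m j) → ℝ) => L i p.1 p.2 k))
    (hPsmooth : ∀ k : ℕ, k < T →
      ContDiff ℝ 1 (fun p : (∀ j, Fin (n j) → ℝ) × (∀ j, Fin (m j) → ℝ) => P p.1 p.2 k))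
    (hSsmooth : ∀ i : Fin N, ContDiff ℝ 1 (S i))
    (hRsmooth : ContDiff ℝ 1 R)
    (hx : ∀ (i : Fin N) (x : ∀ j, Fin (n j) → ℝ) (u : ∀ j, Fin (m j) → ℝ) (k : ℕ),
      k < T →
      fderiv ℝ (fun xi : Fin (n i) → ℝ => L i (Function.update x i xi) u k) (x i)
        = fderiv ℝ (fun xi : Fin (n i) → ℝ => P (Function.update x i xi) u k) (x i))
    (hu : ∀ (i : Fin N) (x : ∀ j, Fin (n j) → ℝ) (u : ∀ j, Fin (m j) → ℝ) (k : ℕ),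
      k < T →
      fderiv ℝ (fun ui : Fin (m i) → ℝ => L i x (Function.update u i ui) k) (u i)
        = fderiv ℝ (fun ui : Fin (m i) → ℝ => P x (Function.update u i ui) k) (u i))
    (hT : ∀ (i : Fin N) (x : ∀ j, Fin (n j) → ℝ),
      fderiv ℝ (fun xi : Fin (n i) → ℝ => S i (Function.update x i xi)) (x i)
        = fderiv ℝ (fun xi : Fin (n i) → ℝ => R (Function.update x i xi)) (x i)) :
    ∀ (i : Fin N) (γ : ∀ j, ℕ → Fin (m j) → ℝ) (ν : ℕ → Fin (m i) → ℝ),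
      agentCost T f x0 L S i γ - agentCost T f x0 L S i (Function.update γ i ν)
        = potCost T f x0 P R γ - potCost T f x0 P R (Function.update γ i ν) := by
  intro i γ ν
  set γ' := Function.update γ i ν with hγ'
  -- trajectories of other agents are unchanged
  have htraj : ∀ (k : ℕ) (j : Fin N), j ≠ i → traj f x0 γ' k j = traj f x0 γ k j := by
    intro k
    induction k with
    | zero => intro j _; rfl
    | succ k ih =>
      intro j hj
      show f j (traj f x0 γ' k j) (γ' j k) k = f j (traj f x0 γ k j) (γ j k) k
      rw [ih j hj, hγ', Function.update_of_ne hj]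
  have hx' : ∀ k, traj f x0 γ' k
      = Function.update (traj f x0 γ k) i (traj f x0 γ' k i) := by
    intro k; funext j
    by_cases hj : j = i
    · subst hj; simp
    · rw [Function.update_of_ne hj]; exact htraj k j hj
  have hu' : ∀ k, (fun j => γ' j k) = Function.update (fun j => γ j k) i (ν k) := by
    intro k; funext j
    exact Function.apply_update (fun j (g : ℕ → Fin (m j) → ℝ) => g k) γ i ν j
  -- differentiability helpers
  have hLd : ∀ (k : ℕ), k < T → ∀ u : ∀ j, Fin (m j) → ℝ,
      Differentiable ℝ (fun x : ∀ j, Fin (n j) → ℝ => L i x u k) := by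
    intro k hk u
    exact ((hLsmooth i k hk).differentiable one_ne_zero).comp
      (differentiable_id.prodMk (differentiable_const u))
  have hPd : ∀ (k : ℕ), k < T → ∀ u : ∀ j, Fin (m j) → ℝ,
      Differentiable ℝ (fun x : ∀ j, Fin (n j) → ℝ => P x u k) := by
    intro k hk u
    exact ((hPsmooth k hk).differentiable one_ne_zero).comp
      (differentiable_id.prodMk (differentiable_const u))
  have hLd' : ∀ (k : ℕ), k < T → ∀ x : ∀ j, Fin (n j) → ℝ,
      Differentiable ℝ (fun u : ∀ j, Fin (m j) → ℝ => L i x u k) := by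
    intro k hk x
    exact ((hLsmooth i k hk).differentiable one_ne_zero).comp
      ((differentiable_const x).prodMk differentiable_id)
  have hPd' : ∀ (k : ℕ), k < T → ∀ x : ∀ j, Fin (n j) → ℝ,
      Differentiable ℝ (fun u : ∀ j, Fin (m j) → ℝ => P x u k) := by
    intro k hk x
    exact ((hPsmooth k hk).differentiable one_ne_zero).comp
      ((differentiable_const x).prodMk differentiable_id)
  -- per-step difference equality
  have hstep : ∀ k, k < T →
      L i (traj f x0 γ' k) (fun j => γ' j k) k - P (traj f x0 γ' k) (fun j => γ' j k) k
        = L i (traj f x0 γ k) (fun j => γ j k) k - P (traj f x0 γ k) (fun j => γ j k) k := by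
    intro k hk
    rw [hx' k, hu' k]
    set x := traj f x0 γ k with hxdef
    set u := fun j => γ j k with hudef
    set a := traj f x0 γ' k i with hadef
    have step1 : L i (Function.update x i a) (Function.update u i (ν k)) k
          - P (Function.update x i a) (Function.update u i (ν k)) k
        = L i (Function.update x i a) u k - P (Function.update x i a) u k :=
      update_diff_const (fun u' => L i (Function.update x i a) u' k)
        (fun u' => P (Function.update x i a) u' k)
        (hLd' k hk _) (hPd' k hk _) i
        (fun u' => hu i (Function.update x i a) u' k hk) u (ν k)
    have step2 : L i (Function.update x i a) u k - P (Function.update x i a) u k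
        = L i x u k - P x u k :=
      update_diff_const (fun x' => L i x' u k) (fun x' => P x' u k)
        (hLd k hk u) (hPd k hk u) i
        (fun x' => hx i x' u k hk) x a
    rw [step1, step2]
  -- terminal difference equality
  have hterm : S i (traj f x0 γ' T) - R (traj f x0 γ' T)
      = S i (traj f x0 γ T) - R (traj f x0 γ T) := by
    rw [hx' T]
    exact update_diff_const (S i) R ((hSsmooth i).differentiable one_ne_zero)
      (hRsmooth.differentiable one_ne_zero) i (fun x' => hT i x') _ _
  have hsum : ∑ k ∈ Finset.range T,
        (L i (traj f x0 γ' k) (fun j => γ' j k) k - P (traj f x0 γ' k) (fun j => γ' j k) k)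
      = ∑ k ∈ Finset.range T,
        (L i (traj f x0 γ k) (fun j => γ j k) k - P (traj f x0 γ k) (fun j => γ j k) k) :=
    Finset.sum_congr rfl (fun k hk => hstep k (Finset.mem_range.mp hk))
  simp only [Finset.sum_sub_distrib] at hsum
  simp only [agentCost, potCost]
  linarith
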